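/- Let K ⊂ L be a finite purely inseparable field extension of height ≤ 1 (i.e., L^p ⊂ K). Then R = L ⊗_K L is a local Artin ring whose residue field is isomorphic to L, and the embedding dimension of R equals the p-degree of the extension K ⊂ L (the cardinality of a p-basis). -/

import Mathlib

set_option maxHeartbeats 1000000
set_option linter.unusedSectionVars false

/-- The embedding dimension of a local ring: `dim_k (m/m²)`. -/
noncomputable def embDim (R : Type) [CommRing R] [IsLocalRing R] : ℕ :=
  Module.finrank (IsLocalRing.ResidueField R) (IsLocalRing.CotangentSpace R)

section Aux
open TensorProduct IsLocalRing

variable (p : ℕ) [Fact p.Prime] (K L : Type) [Field K] [Field L] [Algebra K L] [CharP K p]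

noncomputable def mu : L ⊗[K] L →ₐ[K] L := Algebra.TensorProduct.lmul' (S := L) K

theorem mu_alg (x : L) : mu K L (algebraMap L (L ⊗[K] L) x) = x := by
  simp [mu, Algebra.TensorProduct.algebraMap_apply, Algebra.TensorProduct.lmul'_apply_tmul]

theorem mu_surj : Function.Surjective (mu K L) :=
  fun x => ⟨x ⊗ₜ 1, by simp [mu, Algebra.TensorProduct.lmul'_apply_tmul]⟩

theorem charR : CharP (L ⊗[K] L) p := by
  have : CharP L p := charP_of_injective_algebraMap (algebraMap K L).injective p
  have hinj : Function.Injective (algebraMap L (L ⊗[K] L)) := fun x y h => by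
    have := congrArg (mu K L) h
    simpa [mu, Algebra.TensorProduct.algebraMap_apply, Algebra.TensorProduct.lmul'_apply_tmul]
      using this
  exact charP_of_injective_algebraMap hinj p

theorem ker_nil (hheight : ∀ x : L, x ^ p ∈ (algebraMap K L).range) :
    ∀ x ∈ KaehlerDifferential.ideal K L, IsNilpotent x := by
  suffices h : KaehlerDifferential.ideal K L ≤ nilradical (L ⊗[K] L) by
    exact fun x hx => mem_nilradical.mp (h hx)
  rw [← KaehlerDifferential.span_range_eq_ideal, Ideal.span_le]
  rintro _ ⟨s, rfl⟩
  haveI := charR p K L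
  show IsNilpotent ((1:L) ⊗ₜ[K] s - s ⊗ₜ[K] (1:L))
  refine ⟨p, ?_⟩
  obtain ⟨c, hc⟩ := hheight s
  haveI := charR p K L
  rw [sub_pow_char]
  have h1 : (1 : L) ⊗ₜ[K] (s ^ p) = (s ^ p) ⊗ₜ[K] (1 : L) := by
    rw [← hc, Algebra.algebraMap_eq_smul_one, TensorProduct.smul_tmul]
  rw [Algebra.TensorProduct.tmul_pow, Algebra.TensorProduct.tmul_pow, one_pow, h1, sub_self]

theorem unit_of_not_mem {x : L ⊗[K] L} (hheight : ∀ x : L, x ^ p ∈ (algebraMap K L).range)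
    (hx : x ∉ KaehlerDifferential.ideal K L) : IsUnit x := by
  have hmu : mu K L x ≠ 0 := fun h => hx h
  set u := algebraMap L (L ⊗[K] L) (mu K L x)⁻¹
  have hz : (1 : L ⊗[K] L) - x * u ∈ KaehlerDifferential.ideal K L := by
    show mu K L _ = 0
    rw [map_sub, map_mul, map_one, mu_alg, mul_inv_cancel₀ hmu, sub_self]
  have : IsUnit (x * u) := by
    have := (ker_nil p K L hheight _ hz).isUnit_one_sub
    simpa using this
  exact isUnit_of_mul_isUnit_left this

theorem isLocal (hheight : ∀ x : L, x ^ p ∈ (algebraMap K L).range) :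
    IsLocalRing (L ⊗[K] L) := by
  refine IsLocalRing.of_nonunits_add ?_
  intro a b ha hb hab
  have ha' : a ∈ KaehlerDifferential.ideal K L := by
    by_contra h; exact ha (unit_of_not_mem p K L hheight h)
  have hb' : b ∈ KaehlerDifferential.ideal K L := by
    by_contra h; exact hb (unit_of_not_mem p K L hheight h)
  exact (ker_nil p K L hheight _ (add_mem ha' hb')).not_isUnit hab

theorem max_eq (hheight : ∀ x : L, x ^ p ∈ (algebraMap K L).range) :
    haveI := isLocal p K L hheight
    maximalIdeal (L ⊗[K] L) = KaehlerDifferential.ideal K L := by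
  haveI := isLocal p K L hheight
  ext x
  rw [IsLocalRing.mem_maximalIdeal]
  constructor
  · intro hx; by_contra h; exact hx (unit_of_not_mem p K L hheight h)
  · intro hx hu
    exact (ker_nil p K L hheight _ hx).not_isUnit hu

section Basis
variable (n : ℕ) (a : Fin n → L) (b : Module.Basis (Fin n → Fin p) K L)

noncomputable def dl (j : Fin n) : L →ₗ[K] L :=
  b.constr K fun e => ((e j : ℕ) : L) * (b e * (a j)⁻¹)

theorem dl_basis (j : Fin n) (e : Fin n → Fin p) :
    dl p K L n a b j (b e) = ((e j : ℕ) : L) * (b e * (a j)⁻¹) :=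
  b.constr_basis K _ e

section
variable (hb : ∀ e : Fin n → Fin p, b e = ∏ i, a i ^ (e i : ℕ))
include hb

theorem charL : CharP L p := charP_of_injective_algebraMap (algebraMap K L).injective p

theorem b_zero : b 0 = 1 := by
  haveI : NeZero p := ⟨(Fact.out : p.Prime).ne_zero⟩
  rw [hb]
  simp

theorem prod_pow_eq (hheight : ∀ x : L, x ^ p ∈ (algebraMap K L).range)
    (q : Fin n → ℕ) :
    ∃ C : K, (∏ i, a i ^ q i) = algebraMap K L C * b (fun i => ⟨q i % p, Nat.mod_lt _ (Fact.out : p.Prime).pos⟩) := by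
  choose c hc using fun i => hheight (a i)
  refine ⟨∏ i, c i ^ (q i / p), ?_⟩
  rw [map_prod, hb, ← Finset.prod_mul_distrib]
  refine Finset.prod_congr rfl fun i _ => ?_
  rw [map_pow, hc]
  conv_lhs => rw [← Nat.div_add_mod (q i) p]
  rw [pow_add, pow_mul]

-- Leibniz rule on basis elements
theorem leibniz_basis (hheight : ∀ x : L, x ^ p ∈ (algebraMap K L).range)
    (j : Fin n) (e f : Fin n → Fin p) :
    dl p K L n a b j (b e * b f) =
      b e * dl p K L n a b j (b f) + b f * dl p K L n a b j (b e) := by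
  haveI := charL p K L n a b hb
  set q : Fin n → ℕ := fun i => (e i : ℕ) + (f i : ℕ) with hq
  set r : Fin n → Fin p := fun i => ⟨q i % p, Nat.mod_lt _ (Fact.out : p.Prime).pos⟩ with hr
  obtain ⟨C, hC⟩ := prod_pow_eq p K L n a b hb hheight q
  have hef : b e * b f = algebraMap K L C * b r := by
    rw [hb e, hb f, ← Finset.prod_mul_distrib]
    rw [← hC]
    exact Finset.prod_congr rfl fun i _ => (pow_add _ _ _).symm
  have hsm : ∀ x : L, algebraMap K L C * x = C • x := fun x => (Algebra.smul_def C x).symm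
  have hcast : ((e j : ℕ) : L) + ((f j : ℕ) : L) = ((r j : ℕ) : L) := by
    have h1 : ((q j % p : ℕ) : L) = ((q j : ℕ) : L) := by
      conv_rhs => rw [← Nat.mod_add_div (q j) p]
      push_cast
      rw [CharP.cast_eq_zero L p]
      ring
    show _ = ((q j % p : ℕ) : L)
    rw [h1, hq]
    push_cast
    ring
  rw [hef, hsm, map_smul, dl_basis, dl_basis, dl_basis]
  rw [show b e * (((f j : ℕ) : L) * (b f * (a j)⁻¹)) + b f * (((e j : ℕ) : L) * (b e * (a j)⁻¹))
      = (((e j : ℕ) : L) + ((f j : ℕ) : L)) * (b e * b f * (a j)⁻¹) from by ring]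
  rw [hcast, hef, Algebra.smul_def]
  ring

noncomputable def Dl (hheight : ∀ x : L, x ^ p ∈ (algebraMap K L).range) (j : Fin n) :
    Derivation K L L where
  toLinearMap := dl p K L n a b j
  map_one_eq_zero' := by
    haveI : NeZero p := ⟨(Fact.out : p.Prime).ne_zero⟩
    have h1 : (1 : L) = b 0 := (b_zero p K L n a b hb).symm
    rw [h1, dl_basis]
    simp
  leibniz' := by
    intro x y
    have key := leibniz_basis p K L n a b hb hheight
    -- bilinear extension
    set d := dl p K L n a b _
    let B1 : L →ₗ[K] L →ₗ[K] L := (LinearMap.mul K L).compr₂ d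
    let B2 : L →ₗ[K] L →ₗ[K] L :=
      ((LinearMap.mul K L).compl₂ d) + ((LinearMap.mul K L).compl₂ d).flip
    have hB : B1 = B2 := by
      refine b.ext fun e => b.ext fun f => ?_
      simpa [B1, B2, LinearMap.mul_apply', smul_eq_mul, mul_comm] using key _ e f
    have := LinearMap.congr_fun (LinearMap.congr_fun hB x) y
    simpa [B1, B2, smul_eq_mul, mul_comm] using this

theorem b_single (i : Fin n) : b (Pi.single i 1) = a i := by
  haveI : NeZero p := ⟨(Fact.out : p.Prime).ne_zero⟩
  rw [hb]
  rw [Fintype.prod_eq_single i (fun k hk => by rw [Pi.single_eq_of_ne hk]; simp)]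
  rw [Pi.single_eq_same]
  have h1 : ((1 : Fin p) : ℕ) = 1 := by
    have := (Fact.out : p.Prime).one_lt
    simp [Fin.val_one', Nat.mod_eq_of_lt this]
  rw [h1, pow_one]

theorem a_ne_zero (i : Fin n) : a i ≠ 0 := by
  rw [← b_single p K L n a b hb]
  exact b.ne_zero _

theorem Dl_apply_a (hheight : ∀ x : L, x ^ p ∈ (algebraMap K L).range) (j i : Fin n) :
    Dl p K L n a b hb hheight j (a i) = if i = j then 1 else 0 := by
  haveI : NeZero p := ⟨(Fact.out : p.Prime).ne_zero⟩
  show dl p K L n a b j (a i) = _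
  rw [← b_single p K L n a b hb, dl_basis]
  rcases eq_or_ne i j with rfl | hij
  · rw [Pi.single_eq_same, if_pos rfl]
    have h1 : ((1 : Fin p) : ℕ) = 1 := by
      have := (Fact.out : p.Prime).one_lt
      simp [Fin.val_one', Nat.mod_eq_of_lt this]
    rw [h1, b_single p K L n a b hb]
    push_cast
    rw [one_mul, mul_inv_cancel₀ (a_ne_zero p K L n a b hb i)]
  · rw [if_neg hij, Pi.single_eq_of_ne (Ne.symm hij)]
    simp

theorem indep (hheight : ∀ x : L, x ^ p ∈ (algebraMap K L).range) :
    LinearIndependent L (fun i => KaehlerDifferential.D K L (a i)) := by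
  rw [Fintype.linearIndependent_iff]
  intro g hg j
  have := congrArg ((Dl p K L n a b hb hheight j).liftKaehlerDifferential) hg
  rw [map_sum, map_zero] at this
  simp only [map_smul, Derivation.liftKaehlerDifferential_comp_D] at this
  rw [Finset.sum_eq_single j] at this
  · rw [Dl_apply_a p K L n a b hb hheight j j, if_pos rfl, smul_eq_mul, mul_one] at this
    exact this
  · intro i _ hij
    rw [Dl_apply_a p K L n a b hb hheight j i, if_neg hij, smul_zero]
  · intro h
    exact absurd (Finset.mem_univ j) h

theorem span_top (hheight : ∀ x : L, x ^ p ∈ (algebraMap K L).range) :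
    Submodule.span L (Set.range fun i => KaehlerDifferential.D K L (a i)) = ⊤ := by
  rw [← top_le_iff, ← KaehlerDifferential.span_range_derivation, Submodule.span_le]
  rintro _ ⟨s, rfl⟩
  set N := Submodule.span L (Set.range fun i => KaehlerDifferential.D K L (a i)) with hN
  show KaehlerDifferential.D K L s ∈ N
  have hprod : ∀ (t : Finset (Fin n)) (g : Fin n → ℕ),
      KaehlerDifferential.D K L (∏ i ∈ t, a i ^ g i) ∈ N := by
    intro t g
    induction t using Finset.induction_on with
    | empty => rw [Finset.prod_empty, Derivation.map_one_eq_zero]; exact N.zero_mem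
    | @insert i t hi IH =>
      rw [Finset.prod_insert hi, Derivation.leibniz]
      refine N.add_mem (N.smul_mem _ IH) (N.smul_mem _ ?_)
      rw [Derivation.leibniz_pow]
      refine N.smul_of_tower_mem _ (N.smul_mem _ ?_)
      exact Submodule.subset_span ⟨i, rfl⟩
  have hs : s ∈ Submodule.span K (Set.range b) := by rw [b.span_eq]; trivial
  induction hs using Submodule.span_induction with
  | mem x hx =>
    obtain ⟨e, rfl⟩ := hx
    rw [hb]
    exact hprod Finset.univ _
  | zero => rw [map_zero]; exact N.zero_mem
  | add x y _ _ hx hy => rw [map_add]; exact N.add_mem hx hy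
  | smul k x _ hx =>
    rw [Derivation.map_smul_of_tower]
    exact N.smul_of_tower_mem k hx

noncomputable def omegaBasis (hheight : ∀ x : L, x ^ p ∈ (algebraMap K L).range) :
    Module.Basis (Fin n) L (KaehlerDifferential K L) :=
  Module.Basis.mk (indep p K L n a b hb hheight) (by rw [span_top p K L n a b hb hheight])

theorem finrank_omega (hheight : ∀ x : L, x ^ p ∈ (algebraMap K L).range) :
    Module.finrank L (KaehlerDifferential K L) = n := by
  rw [Module.finrank_eq_card_basis (omegaBasis p K L n a b hb hheight), Fintype.card_fin]

end

end Basis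

section Transfer
variable (hheight : ∀ x : L, x ^ p ∈ (algebraMap K L).range)

/-- The residue-field side ring hom. -/
noncomputable def sigma : L ≃+* (haveI := isLocal p K L hheight; ResidueField (L ⊗[K] L)) := by
  haveI := isLocal p K L hheight
  refine RingEquiv.ofBijective ((residue (L ⊗[K] L)).comp (algebraMap L (L ⊗[K] L))) ⟨?_, ?_⟩
  · exact RingHom.injective _
  · intro y
    obtain ⟨r, rfl⟩ := Ideal.Quotient.mk_surjective y
    refine ⟨mu K L r, ?_⟩
    show Ideal.Quotient.mk _ _ = _
    rw [Ideal.Quotient.eq, max_eq p K L hheight]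
    show mu K L _ = 0
    rw [map_sub, mu_alg, sub_self]

theorem sigma_apply (c : L) :
    haveI := isLocal p K L hheight
    sigma p K L hheight c = residue (L ⊗[K] L) (algebraMap L (L ⊗[K] L) c) := rfl

noncomputable def cotEquiv :
    haveI := isLocal p K L hheight
    KaehlerDifferential K L ≃ₗ[K] CotangentSpace (L ⊗[K] L) := by
  haveI := isLocal p K L hheight
  have h1 : KaehlerDifferential.ideal K L ≤
      (maximalIdeal (L ⊗[K] L)).comap (AlgHom.id K (L ⊗[K] L)) := by
    rw [max_eq p K L hheight]; exact fun x hx => hx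
  have h2 : maximalIdeal (L ⊗[K] L) ≤
      (KaehlerDifferential.ideal K L).comap (AlgHom.id K (L ⊗[K] L)) := by
    rw [max_eq p K L hheight]; exact fun x hx => hx
  refine LinearEquiv.ofLinear
    (Ideal.mapCotangent _ _ (AlgHom.id K (L ⊗[K] L)) h1)
    (Ideal.mapCotangent _ _ (AlgHom.id K (L ⊗[K] L)) h2) ?_ ?_
  · refine LinearMap.ext fun x => ?_
    obtain ⟨y, rfl⟩ := Ideal.toCotangent_surjective _ x
    show Ideal.mapCotangent _ _ _ h1 (Ideal.mapCotangent _ _ _ h2 (Ideal.toCotangent _ y)) = _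
    rw [Ideal.mapCotangent_toCotangent, Ideal.mapCotangent_toCotangent]
    rfl
  · refine LinearMap.ext fun x => ?_
    obtain ⟨y, rfl⟩ := Ideal.toCotangent_surjective _ x
    show Ideal.mapCotangent _ _ _ h2 (Ideal.mapCotangent _ _ _ h1 (Ideal.toCotangent _ y)) = _
    rw [Ideal.mapCotangent_toCotangent, Ideal.mapCotangent_toCotangent]
    rfl

theorem cotEquiv_smul (r : L ⊗[K] L) (m : KaehlerDifferential K L) :
    haveI := isLocal p K L hheight
    cotEquiv p K L hheight (r • m) = r • cotEquiv p K L hheight m := by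
  haveI := isLocal p K L hheight
  obtain ⟨y, rfl⟩ := Ideal.toCotangent_surjective _ m
  have hmem : ∀ z : KaehlerDifferential.ideal K L, (z : L ⊗[K] L) ∈ maximalIdeal (L ⊗[K] L) :=
    fun z => by rw [max_eq p K L hheight]; exact z.2
  have e1 : ∀ z : (KaehlerDifferential.ideal K L),
      cotEquiv p K L hheight ((KaehlerDifferential.ideal K L).toCotangent z) =
        (maximalIdeal (L ⊗[K] L)).toCotangent ⟨z.1, hmem z⟩ := fun z => rfl
  erw [← map_smul ((KaehlerDifferential.ideal K L).toCotangent), e1, e1, ← map_smul]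
  rfl

theorem finrank_transfer :
    haveI := isLocal p K L hheight
    Module.finrank (ResidueField (L ⊗[K] L)) (CotangentSpace (L ⊗[K] L)) =
      Module.finrank L (KaehlerDifferential K L) := by
  haveI := isLocal p K L hheight
  have hrank := rank_eq_of_equiv_equiv (R := L)
    (R' := ResidueField (L ⊗[K] L)) (M := KaehlerDifferential K L)
    (M₁ := CotangentSpace (L ⊗[K] L))
    (sigma p K L hheight : L → ResidueField (L ⊗[K] L))
    (cotEquiv p K L hheight).toAddEquiv
    (sigma p K L hheight).bijective ?_
  · rw [Module.finrank, Module.finrank, hrank]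
  · intro c m
    show cotEquiv p K L hheight (c • m) = sigma p K L hheight c • cotEquiv p K L hheight m
    rw [← algebraMap_smul (L ⊗[K] L) c m, cotEquiv_smul, sigma_apply]
    have h2 : residue (L ⊗[K] L) (algebraMap L (L ⊗[K] L) c) =
        algebraMap (L ⊗[K] L) (ResidueField (L ⊗[K] L)) (algebraMap L (L ⊗[K] L) c) := rfl
    rw [h2, algebraMap_smul (ResidueField (L ⊗[K] L))]

end Transfer
end Aux

/-- Let `K ⊂ L` be a finite purely inseparable field extension of height `≤ 1`
(`L^p ⊂ K`), with a `p`-basis `a₁, …, aₙ` (the monomials `a₁^{e₁} ⋯ aₙ^{eₙ}` with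
`0 ≤ eᵢ < p` form a `K`-basis of `L`).  Then `R = L ⊗_K L` is a local Artin ring with
residue field isomorphic to `L`, and the embedding dimension of `R` equals the
`p`-degree `n` of the extension `K ⊂ L`. -/
theorem stmt_5 (p : ℕ) [Fact p.Prime] (K L : Type) [Field K] [Field L] [Algebra K L]
    [CharP K p] (hheight : ∀ x : L, x ^ p ∈ (algebraMap K L).range)
    (n : ℕ) (a : Fin n → L) (b : Module.Basis (Fin n → Fin p) K L)
    (hb : ∀ e : Fin n → Fin p, b e = ∏ i, a i ^ (e i : ℕ)) :
    ∃ h : IsLocalRing (TensorProduct K L L),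
      IsArtinianRing (TensorProduct K L L) ∧
      Nonempty (@IsLocalRing.ResidueField (TensorProduct K L L) _ h ≃+* L) ∧
      @embDim (TensorProduct K L L) _ h = n := by
  haveI h := isLocal p K L hheight
  refine ⟨h, ?_, ⟨(sigma p K L hheight).symm⟩, ?_⟩
  · haveI : Module.Finite K L := Module.Finite.of_basis b
    haveI : Module.Finite L (TensorProduct K L L) := Module.Finite.base_change K L L
    haveI : IsArtinian L (TensorProduct K L L) := isArtinian_of_fg_of_artinian'
    exact isArtinian_of_tower L inferInstance
  · show Module.finrank (IsLocalRing.ResidueField _) (IsLocalRing.CotangentSpace _) = n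
    rw [finrank_transfer p K L hheight, finrank_omega p K L n a b hb hheight]
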